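/- Let D be an ultrafilter on ω and let Q_{s,k} be a centered piece of eventually different forcing E. Define lim^D : (Q_{s,k})^ω → Q_{s,k} by lim^D⟨(s,k,φ_m)⟩_{m<ω} = (s,k,φ^∞) where j ∈ φ^∞(i) iff {m < ω : j ∈ φ_m(i)} ∈ D. Then φ^∞(i) has size at most k for every i (so lim^D is well-defined into Q_{s,k}), and: if r = (s',k',φ') ≤ lim^D⟨q_m⟩ then the set {m < ω : q_m is compatible with r} belongs to D. -/
import Mathlib


/-- A condition of eventually different forcing `𝔼`: a triple `(s,k,φ)` with
`s ∈ ω^{<ω}`, `k < ω` and `φ : ω → [ω]^{≤k}`. -/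
structure EDCond where
  s : List ℕ
  k : ℕ
  φ : ℕ → Finset ℕ
  hφ : ∀ i, (φ i).card ≤ k

/-- The order on `𝔼`: `e' ≤ e` iff `s' ⊇ s`, `k' ≥ k`, `φ'(i) ⊇ φ(i)` for all `i`, and
`s'(i) ∉ φ(i)` for all `i ∈ dom(s') \ dom(s)`. -/
def EDle (e' e : EDCond) : Prop :=
  e.s <+: e'.s ∧ e.k ≤ e'.k ∧ (∀ i, e.φ i ⊆ e'.φ i) ∧
    ∀ i, e.s.length ≤ i → i < e'.s.length → e'.s.getD i 0 ∉ e.φ i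

lemma card_le_aux (D : Ultrafilter ℕ) (k : ℕ) (φs : ℕ → ℕ → Finset ℕ)
    (hφ : ∀ m i, (φs m i).card ≤ k) (i : ℕ) (T : Finset ℕ)
    (hT : ∀ j ∈ T, {m | j ∈ φs m i} ∈ D) : T.card ≤ k := by
  have hmem : (⋂ j ∈ T, {m | j ∈ φs m i}) ∈ D :=
    (Filter.biInter_finset_mem T).2 hT
  obtain ⟨m, hm⟩ := Filter.nonempty_of_mem hmem
  simp only [Set.mem_iInter] at hm
  calc T.card ≤ (φs m i).card := Finset.card_le_card (fun j hj => hm j hj)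
    _ ≤ k := hφ m i

theorem stmt_12 (D : Ultrafilter ℕ) (hD : ∀ A : Set ℕ, A.Finite → A ∉ D)
    (s : List ℕ) (k : ℕ) (φs : ℕ → ℕ → Finset ℕ) (hφ : ∀ m i, (φs m i).card ≤ k) :
    ∃ (F : ℕ → Finset ℕ) (hF : ∀ i, (F i).card ≤ k),
      (∀ i, (F i : Set ℕ) = {j | {m | j ∈ φs m i} ∈ D}) ∧
      ∀ r : EDCond, EDle r ⟨s, k, F, hF⟩ →
        {m | ∃ c : EDCond, EDle c r ∧ EDle c ⟨s, k, φs m, hφ m⟩} ∈ D := by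
  have hfin : ∀ i, {j | {m | j ∈ φs m i} ∈ D}.Finite := by
    intro i
    by_contra h
    replace h : {j | {m | j ∈ φs m i} ∈ D}.Infinite := h
    obtain ⟨T, hTsub, hTcard⟩ := h.exists_subset_card_eq (k + 1)
    have := card_le_aux D k φs hφ i T (fun j hj => hTsub hj)
    omega
  refine ⟨fun i => (hfin i).toFinset, ?_, ?_, ?_⟩
  · intro i
    exact card_le_aux D k φs hφ i _ (fun j hj => (hfin i).mem_toFinset.1 hj)
  · intro i; exact (hfin i).coe_toFinset
  · intro r hr
    obtain ⟨hpre, hk, hsub, hnew⟩ := hr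
    have hA : (⋂ i ∈ Finset.Ico s.length r.s.length, {m | r.s.getD i 0 ∉ φs m i}) ∈ D := by
      refine (Filter.biInter_finset_mem _).2 (fun i hi => ?_)
      simp only [Finset.mem_Ico] at hi
      have h1 : r.s.getD i 0 ∉ (hfin i).toFinset := hnew i hi.1 hi.2
      rw [Set.Finite.mem_toFinset] at h1
      have : {m | r.s.getD i 0 ∈ φs m i} ∉ D := h1
      have := (Ultrafilter.compl_mem_iff_notMem (f := D)).2 this
      exact this
    refine D.toFilter.mem_of_superset hA ?_
    intro m hm
    simp only [Set.mem_iInter, Finset.mem_Ico] at hm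
    refine ⟨⟨r.s, r.k + k, fun i => r.φ i ∪ φs m i, fun i => ?_⟩, ?_, ?_⟩
    · exact le_trans (Finset.card_union_le _ _) (Nat.add_le_add (r.hφ i) (hφ m i))
    · exact ⟨List.prefix_refl _, Nat.le_add_right _ _,
        fun i => Finset.subset_union_left, fun i h1 h2 => absurd h2 (Nat.not_lt.2 h1)⟩
    · exact ⟨hpre, Nat.le_add_left _ _, fun i => Finset.subset_union_right,
        fun i h1 h2 => hm i ⟨h1, h2⟩⟩
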